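/- Let P be an N×N doubly stochastic matrix such that A = I − P + (1/N)eeᵀ is nonsingular, and let I − P = LU be the LU decomposition with L unit lower triangular. Define v by Lv = e, Ū = U + v e_Nᵀ, and w by Ūᵀw = (1/N)e − e_N. Then wᵀv = 0. -/

import Mathlib

open Matrix

/-- With A = I − P + (1/N)eeᵀ nonsingular and I − P = LU, setting Lv = e,
Ū = U + v e_Nᵀ and Ūᵀw = (1/N)e − e_N, we have wᵀv = 0. -/
theorem wT_v_eq_zero (N : ℕ) (P : Matrix (Fin (N + 1)) (Fin (N + 1)) ℝ)
    (hnonneg : ∀ i j, 0 ≤ P i j)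
    (hrow : ∀ i, ∑ j, P i j = 1)
    (hcol : ∀ j, ∑ i, P i j = 1)
    (hA : (1 - P + ((N + 1 : ℝ))⁻¹ • vecMulVec (fun _ => (1 : ℝ)) (fun _ => (1 : ℝ))).det ≠ 0)
    (L U : Matrix (Fin (N + 1)) (Fin (N + 1)) ℝ)
    (hLdiag : ∀ i, L i i = 1)
    (hLlow : ∀ i j : Fin (N + 1), i < j → L i j = 0)
    (hUup : ∀ i j : Fin (N + 1), j < i → U i j = 0)
    (hLU : 1 - P = L * U)
    (v w : Fin (N + 1) → ℝ)
    (hv : L *ᵥ v = fun _ => (1 : ℝ))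
    (hw : (U + vecMulVec v (Pi.single (Fin.last N) 1))ᵀ *ᵥ w
        = (N + 1 : ℝ)⁻¹ • (fun _ => (1 : ℝ)) - Pi.single (Fin.last N) 1) :
    w ⬝ᵥ v = 0 := by
  set e : Fin (N + 1) → ℝ := fun _ => (1 : ℝ) with he
  -- (1 - P) *ᵥ e = 0
  have hIP : (1 - P) *ᵥ e = 0 := by
    funext i
    simp [mulVec, dotProduct, he, Matrix.sub_apply, Matrix.one_apply, sub_mul,
      Finset.sum_sub_distrib, hrow i]
  -- L is invertible
  have hLdet : L.det = 1 := by
    rw [Matrix.det_of_lowerTriangular L (fun i j hij => hLlow i j hij)]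
    simp [hLdiag]
  have hLinv : IsUnit L.det := by rw [hLdet]; exact isUnit_one
  -- U *ᵥ e = 0
  have hUe : U *ᵥ e = 0 := by
    have h1 : L *ᵥ (U *ᵥ e) = L *ᵥ 0 := by
      rw [Matrix.mulVec_mulVec, ← hLU, hIP, Matrix.mulVec_zero]
    exact (Matrix.mulVec_injective_iff_isUnit.2 ((Matrix.isUnit_iff_isUnit_det L).2 hLinv)) h1
  -- Ū *ᵥ e = v
  have hUbar : (U + vecMulVec v (Pi.single (Fin.last N) 1)) *ᵥ e = v := by
    rw [Matrix.add_mulVec, hUe]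
    funext i
    simp [mulVec, vecMulVec_apply, dotProduct, he, ← Finset.mul_sum,
      Finset.sum_pi_single]
  -- conclude
  have key : w ⬝ᵥ v
      = ((N + 1 : ℝ)⁻¹ • e - Pi.single (Fin.last N) 1) ⬝ᵥ e := by
    calc w ⬝ᵥ v = w ⬝ᵥ ((U + vecMulVec v (Pi.single (Fin.last N) 1)) *ᵥ e) := by
          rw [hUbar]
      _ = (w ᵥ* (U + vecMulVec v (Pi.single (Fin.last N) 1))) ⬝ᵥ e :=
          Matrix.dotProduct_mulVec ..
      _ = ((N + 1 : ℝ)⁻¹ • e - Pi.single (Fin.last N) 1) ⬝ᵥ e := by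
          rw [← Matrix.mulVec_transpose, hw]
  rw [key]
  have : ((N + 1 : ℝ)⁻¹ • e - Pi.single (Fin.last N) 1) ⬝ᵥ e
      = (∑ _i : Fin (N + 1), (N + 1 : ℝ)⁻¹) - 1 := by
    simp [dotProduct, he, sub_mul, Finset.sum_sub_distrib, Finset.sum_pi_single]
  rw [this]
  rw [Finset.sum_const]
  simp
  field_simp
  ring
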